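/- Let (r_n)_{n≥1} be nonnegative reals with Σ_{j≥n} r_j ≤ C n^{-k-β} for some k ∈ ℕ, β ∈ (0,1), C > 0. Define g(z) = Σ_{i≥0} P_{i+k}^k r_{i+k} z^i on the closed unit disk, where P_{i+k}^k = (i+k)(i+k-1)⋯(i+1). Then g is β-Hölder on the closed unit disk: there is a constant C' depending only on C, k, β such that |g(z₁) - g(z₂)| ≤ C' |z₁ - z₂|^β for all z₁, z₂ in the closed unit disk. -/

import Mathlib

open Finset

-- concavity: t^s ≤ (1-s) + s*t for t ≥ 0 (t ≤ 1 not needed?), 0 ≤ s ≤ 1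
lemma aux_concave {t s : ℝ} (ht : 0 ≤ t) (hs0 : 0 ≤ s) (hs1 : s ≤ 1) :
    t ^ s ≤ 1 - s + s * t := by
  have h := Real.geom_mean_le_arith_mean2_weighted (by linarith : (0:ℝ) ≤ 1 - s) hs0
    (by norm_num : (0:ℝ) ≤ 1) ht (by ring)
  calc t ^ s = 1 ^ (1-s) * t ^ s := by rw [Real.one_rpow, one_mul]
    _ ≤ (1-s) * 1 + s * t := h
    _ = 1 - s + s * t := by ring

-- convexity side: 1 + s*(1-t) ≤ t^(-s) for 0 < t, 0 ≤ s
lemma aux_convex {t s : ℝ} (ht : 0 < t) (hs0 : 0 ≤ s) :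
    1 + s * (1 - t) ≤ t ^ (-s) := by
  have h1 : t ^ (-s) = Real.exp (-s * Real.log t) := by
    rw [Real.rpow_def_of_pos ht]; ring_nf
  have h2 : 1 + (-s * Real.log t) ≤ Real.exp (-s * Real.log t) := by
    have := Real.add_one_le_exp (-s * Real.log t); linarith
  have h3 : Real.log t ≤ t - 1 := Real.log_le_sub_one_of_pos ht
  have h4 : s * (1 - t) ≤ -s * Real.log t := by nlinarith
  rw [h1]; linarith

-- L1: for real x ≥ 2: β x^{-1-β} ≤ (x-1)^{-β} - x^{-β}
lemma aux_L1 {x β : ℝ} (hx : 2 ≤ x) (hβ0 : 0 < β) :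
    β * x ^ (-1 - β) ≤ (x - 1) ^ (-β) - x ^ (-β) := by
  have hx0 : 0 < x := by linarith
  have ht0 : 0 < (x-1)/x := div_pos (by linarith) hx0
  have hsplit : (x - 1) ^ (-β) = x ^ (-β) * ((x-1)/x) ^ (-β) := by
    rw [← Real.mul_rpow hx0.le ht0.le]
    congr 1
    field_simp
  have hcv : 1 + β * (1 - (x-1)/x) ≤ ((x-1)/x) ^ (-β) := aux_convex ht0 hβ0.le
  have h1t : 1 - (x-1)/x = 1/x := by field_simp; ring
  have hxb : (0:ℝ) < x ^ (-β) := Real.rpow_pos_of_pos hx0 _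
  have key : x ^ (-β) * (β * (1/x)) ≤ (x - 1) ^ (-β) - x ^ (-β) := by
    rw [hsplit]
    have := mul_le_mul_of_nonneg_left hcv hxb.le
    rw [h1t] at hcv
    nlinarith
  have : x ^ (-β) * (β * (1/x)) = β * x ^ (-1-β) := by
    rw [show (-1-β : ℝ) = -β + (-1) by ring, Real.rpow_add hx0, Real.rpow_neg_one]
    field_simp
  linarith [this ▸ key]

-- L3 pointwise: for real x ≥ 1: (1-β) x^{-β} ≤ x^{1-β} - (x-1)^{1-β}
lemma aux_L3 {x β : ℝ} (hx : 1 ≤ x) (hβ0 : 0 < β) (hβ1 : β < 1) :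
    (1 - β) * x ^ (-β) ≤ x ^ (1-β) - (x - 1) ^ (1-β) := by
  have hx0 : 0 < x := by linarith
  have ht0 : 0 ≤ (x-1)/x := div_nonneg (by linarith) hx0.le
  have hsplit : (x - 1) ^ (1-β) = x ^ (1-β) * ((x-1)/x) ^ (1-β) := by
    rw [← Real.mul_rpow hx0.le ht0]
    congr 1
    field_simp
  have hcc : ((x-1)/x) ^ (1-β) ≤ 1 - (1-β) + (1-β) * ((x-1)/x) :=
    aux_concave ht0 (by linarith) (by linarith)
  have h1t : (1:ℝ) - (x-1)/x = 1/x := by field_simp; ring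
  have hxb : (0:ℝ) < x ^ (1-β) := Real.rpow_pos_of_pos hx0 _
  have key : x ^ (1-β) * ((1-β) * (1/x)) ≤ x ^ (1-β) - (x - 1) ^ (1-β) := by
    rw [hsplit]
    have h2 := mul_le_mul_of_nonneg_left hcc hxb.le
    have h3 : x ^ (1-β) - x ^ (1-β) * (1 - (1-β) + (1-β)*((x-1)/x))
        = x ^ (1-β) * ((1-β) * (1 - (x-1)/x)) := by ring
    rw [h1t] at h3
    linarith
  have heq : x ^ (1-β) * ((1-β) * (1/x)) = (1-β) * x ^ (-β) := by
    rw [show (-β : ℝ) = (1-β) + (-1) by ring, Real.rpow_add hx0, Real.rpow_neg_one]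
    field_simp
  linarith [heq ▸ key]

-- pow difference: x^(j+1) - (x-1)^(j+1) ≤ (j+1) x^j  for x ≥ 1
lemma aux_powdiff (j : ℕ) {x : ℝ} (hx : 1 ≤ x) :
    x ^ (j+1) - (x-1) ^ (j+1) ≤ (j+1) * x ^ j := by
  induction j with
  | zero => simp
  | succ j ih =>
      have h1 : (x-1)^(j+1) ≤ x^(j+1) := pow_le_pow_left₀ (by linarith) (by linarith) _
      have hxj : (0:ℝ) ≤ x ^ j := by positivity
      push_cast
      calc x ^ (j+2) - (x-1)^(j+2) = x * (x^(j+1) - (x-1)^(j+1)) + (x-1)^(j+1) := by ring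
        _ ≤ x * ((j+1) * x^j) + x^(j+1) := by
            have := mul_le_mul_of_nonneg_left ih (by linarith : (0:ℝ) ≤ x)
            push_cast
            nlinarith
        _ = ((j:ℝ) + 1 + 1) * x^(j+1) := by ring
      

lemma aux_sumtail {β : ℝ} (hβ0 : 0 < β) (N : ℕ) (hN : 1 ≤ N) (M : ℕ) :
    ∑ n ∈ Finset.Icc (N+1) M, ((n:ℝ)) ^ (-1-β) ≤ (N:ℝ) ^ (-β) / β := by
  have hNpos : (0:ℝ) < (N:ℝ) := by exact_mod_cast Nat.pos_of_ne_zero (by omega)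
  rcases le_or_gt N M with h | h
  · have key : ∀ M', N ≤ M' → ∑ n ∈ Finset.Icc (N+1) M', ((n:ℝ)) ^ (-1-β)
        ≤ ((N:ℝ) ^ (-β) - (M':ℝ) ^ (-β)) / β := by
      intro M' hle
      induction M', hle using Nat.le_induction with
      | base => rw [Finset.Icc_eq_empty (by omega), Finset.sum_empty]; simp
      | succ M' hNM ih =>
        rw [← Finset.insert_Icc_right_eq_Icc_add_one (by omega : N+1 ≤ M'+1),
            Finset.sum_insert (by simp)]
        have hx : (2:ℝ) ≤ ((M'+1:ℕ):ℝ) := by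
          have h1 : 1 ≤ M' := le_trans hN hNM
          have h2 : (1:ℝ) ≤ (M':ℝ) := by exact_mod_cast h1
          push_cast; linarith
        have hL1 := aux_L1 hx hβ0
        have hsub : ((M'+1:ℕ):ℝ) - 1 = (M':ℝ) := by push_cast; ring
        rw [hsub] at hL1
        have hterm : ((M'+1:ℕ):ℝ) ^ (-1-β) ≤ ((M':ℝ) ^ (-β) - ((M'+1:ℕ):ℝ) ^ (-β)) / β := by
          rw [le_div_iff₀ hβ0]; linarith
        push_cast at hterm ih ⊢
        have hcomb : ((M':ℝ) ^ (-β) - ((M':ℝ) + 1) ^ (-β)) / β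
            + ((N:ℝ) ^ (-β) - (M':ℝ) ^ (-β)) / β
            = ((N:ℝ) ^ (-β) - ((M':ℝ) + 1) ^ (-β)) / β := by ring
        linarith
    have hM := key M h
    have h0 : (0:ℝ) ≤ (M:ℝ) ^ (-β) := Real.rpow_nonneg (Nat.cast_nonneg M) _
    have h1 : ((N:ℝ) ^ (-β) - (M:ℝ) ^ (-β)) / β ≤ (N:ℝ) ^ (-β) / β := by
      gcongr
      linarith
    linarith
  · rw [show Finset.Icc (N+1) M = ∅ from Finset.Icc_eq_empty (by omega), Finset.sum_empty]
    positivity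

lemma aux_sumhead {β : ℝ} (hβ0 : 0 < β) (hβ1 : β < 1) (M : ℕ) :
    ∑ n ∈ Finset.Icc 1 M, ((n:ℝ)) ^ (-β) ≤ (M:ℝ) ^ (1-β) / (1-β) := by
  induction M with
  | zero =>
      rw [show Finset.Icc 1 0 = ∅ from rfl, Finset.sum_empty, Nat.cast_zero,
        Real.zero_rpow (by linarith), zero_div]
  | succ M ih =>
      rw [← Finset.insert_Icc_right_eq_Icc_add_one (by omega : 1 ≤ M+1), Finset.sum_insert (by simp)]
      have hx : (1:ℝ) ≤ ((M+1:ℕ):ℝ) := by push_cast; linarith [Nat.cast_nonneg (α := ℝ) M]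
      have hL3 := aux_L3 hx hβ0 hβ1
      have hsub : ((M+1:ℕ):ℝ) - 1 = (M:ℝ) := by push_cast; ring
      rw [hsub] at hL3
      have hterm : ((M+1:ℕ):ℝ) ^ (-β) ≤ (((M+1:ℕ):ℝ) ^ (1-β) - (M:ℝ) ^ (1-β)) / (1-β) := by
        rw [le_div_iff₀ (by linarith)]; linarith
      push_cast at hterm ih ⊢
      have hcomb : (((M:ℝ) + 1) ^ (1-β) - (M:ℝ) ^ (1-β)) / (1-β)
          + (M:ℝ) ^ (1-β) / (1-β) = ((M:ℝ) + 1) ^ (1-β) / (1-β) := by ring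
      linarith

lemma aux_abel (a rr T : ℕ → ℝ) (hT : ∀ n, T n = rr n + T (n+1)) :
    ∀ N M, N ≤ M →
    ∑ n ∈ Finset.Icc N M, a n * rr n
      = a N * T N - a M * T (M+1) + ∑ n ∈ Finset.Icc (N+1) M, (a n - a (n-1)) * T n := by
  intro N M h
  induction M, h using Nat.le_induction with
  | base =>
      rw [Finset.Icc_self, Finset.sum_singleton,
        show Finset.Icc (N+1) N = ∅ from Finset.Icc_eq_empty (by omega),
        Finset.sum_empty, hT N]; ring
  | succ M hNM ih =>
      rw [← Finset.insert_Icc_right_eq_Icc_add_one (by omega : N ≤ M+1), Finset.sum_insert (by simp),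
          ← Finset.insert_Icc_right_eq_Icc_add_one (by omega : N+1 ≤ M+1), Finset.sum_insert (by simp), ih]
      have h2 : rr (M+1) = T (M+1) - T (M+2) := by have := hT (M+1); linarith
      rw [h2]
      simp only [Nat.add_sub_cancel]
      ring

lemma aux_T (r : ℕ → ℝ) (hsum : Summable r) (n : ℕ) :
    (∑' j : ℕ, r (n + j)) = r n + ∑' j : ℕ, r ((n+1) + j) := by
  have hs : Summable (fun j => r (n + j)) := hsum.comp_injective (add_right_injective n)
  rw [Summable.tsum_eq_zero_add hs]
  congr 1
  exact tsum_congr fun j => by rw [show n + (j+1) = (n+1) + j by omega]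

lemma aux_lemA (k : ℕ) (hk : 1 ≤ k) {β C : ℝ} (hβ0 : 0 < β) (hβ1 : β < 1) (hC : 0 < C)
    (r : ℕ → ℝ) (hr : ∀ n, 0 ≤ r n) (hsum : Summable r)
    (htail : ∀ n : ℕ, 1 ≤ n → (∑' j : ℕ, r (n + j)) ≤ C * (n : ℝ) ^ (-(k : ℝ) - β))
    (N M : ℕ) (hN : 1 ≤ N) :
    ∑ n ∈ Finset.Ico N M, (n:ℝ)^k * r n ≤ (C * (1 + k / β)) * (N:ℝ) ^ (-β) := by
  have hNpos : (0:ℝ) < (N:ℝ) := by exact_mod_cast Nat.pos_of_ne_zero (by omega)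
  have hkβ : (0:ℝ) ≤ 1 + k / β := by
    have : (0:ℝ) ≤ (k:ℝ) / β := div_nonneg (Nat.cast_nonneg k) hβ0.le
    linarith
  rcases le_or_gt M N with h | h
  · rw [Finset.Ico_eq_empty (by omega), Finset.sum_empty]
    exact mul_nonneg (mul_nonneg hC.le hkβ) (Real.rpow_nonneg hNpos.le _)
  · obtain ⟨M', rfl⟩ : ∃ M', M = M'+1 := ⟨M-1, by omega⟩
    have hNM' : N ≤ M' := by omega
    rw [Finset.Ico_add_one_right_eq_Icc]
    set T : ℕ → ℝ := fun n => ∑' j : ℕ, r (n + j) with hTdef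
    have hT : ∀ n, T n = r n + T (n+1) := fun n => aux_T r hsum n
    have hT0 : ∀ n, 0 ≤ T n := fun n => tsum_nonneg (fun j => hr _)
    rw [aux_abel (fun n => (n:ℝ)^k) r T hT N M' hNM']
    beta_reduce

    -- term 1
    have e1 : ((N:ℝ))^k * ((N:ℝ))^(-(k:ℝ)-β) = (N:ℝ)^(-β) := by
      rw [← Real.rpow_natCast (N:ℝ) k, ← Real.rpow_add hNpos]
      congr 1; ring
    have h1 : ((N:ℝ))^k * T N ≤ C * (N:ℝ)^(-β) := by
      have := htail N hN
      calc ((N:ℝ))^k * T N ≤ ((N:ℝ))^k * (C * (N:ℝ)^(-(k:ℝ)-β)) :=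
            mul_le_mul_of_nonneg_left this (by positivity)
        _ = C * (N:ℝ)^(-β) := by rw [← e1]; ring
    -- term 2
    have h2 : (0:ℝ) ≤ ((M':ℝ))^k * T (M'+1) := mul_nonneg (by positivity) (hT0 _)
    -- term 3
    have h3 : ∑ n ∈ Finset.Icc (N+1) M', ((n:ℝ)^k - ((n-1:ℕ):ℝ)^k) * T n
        ≤ ∑ n ∈ Finset.Icc (N+1) M', (C * k) * (n:ℝ)^(-1-β) := by
      apply Finset.sum_le_sum
      intro n hn
      rw [Finset.mem_Icc] at hn
      have hn1 : 1 ≤ n := by omega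
      have hnR : (1:ℝ) ≤ (n:ℝ) := by exact_mod_cast hn1
      have hnpos : (0:ℝ) < (n:ℝ) := by linarith
      have hcast : ((n-1:ℕ):ℝ) = (n:ℝ) - 1 := by
        push_cast [Nat.cast_sub hn1]; ring
      have hd0 : (0:ℝ) ≤ (n:ℝ)^k - ((n-1:ℕ):ℝ)^k := by
        rw [hcast]
        have := pow_le_pow_left₀ (by linarith : (0:ℝ) ≤ (n:ℝ)-1) (by linarith : (n:ℝ)-1 ≤ n) k
        linarith
      have hdk : (n:ℝ)^k - ((n-1:ℕ):ℝ)^k ≤ (k:ℝ) * (n:ℝ)^(k-1) := by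
        rw [hcast]
        obtain ⟨j, rfl⟩ : ∃ j, k = j+1 := ⟨k-1, by omega⟩
        have := aux_powdiff j hnR
        simpa using this
      have hTn : T n ≤ C * (n:ℝ)^(-(k:ℝ)-β) := htail n hn1
      calc ((n:ℝ)^k - ((n-1:ℕ):ℝ)^k) * T n
          ≤ ((k:ℝ) * (n:ℝ)^(k-1)) * (C * (n:ℝ)^(-(k:ℝ)-β)) := by
            apply mul_le_mul hdk hTn (hT0 n)
            positivity
        _ = (C * k) * ((n:ℝ)^(k-1:ℕ) * (n:ℝ)^(-(k:ℝ)-β)) := by ring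
        _ = (C * k) * (n:ℝ)^(-1-β) := by
            congr 1
            rw [← Real.rpow_natCast (n:ℝ) (k-1), ← Real.rpow_add hnpos]
            congr 1
            push_cast [Nat.cast_sub hk]
            ring
    have h4 : ∑ n ∈ Finset.Icc (N+1) M', (C * k) * (n:ℝ)^(-1-β)
        ≤ (C * k) * ((N:ℝ)^(-β) / β) := by
      rw [← Finset.mul_sum]
      exact mul_le_mul_of_nonneg_left (aux_sumtail hβ0 N hN M') (by positivity)
    have final : C * (N:ℝ)^(-β) + (C * k) * ((N:ℝ)^(-β)/β)
        = (C * (1 + k / β)) * (N:ℝ)^(-β) := by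
      field_simp
    linarith

lemma aux_lemB (k : ℕ) (hk : 1 ≤ k) {β C : ℝ} (hβ0 : 0 < β) (hβ1 : β < 1) (hC : 0 < C)
    (r : ℕ → ℝ) (hr : ∀ n, 0 ≤ r n) (hsum : Summable r)
    (htail : ∀ n : ℕ, 1 ≤ n → (∑' j : ℕ, r (n + j)) ≤ C * (n : ℝ) ^ (-(k : ℝ) - β))
    (M : ℕ) (hM : 1 ≤ M) :
    ∑ n ∈ Finset.Icc 1 M, (n:ℝ)^(k+1) * r n
      ≤ (C * (1 + (k+1) / (1-β))) * (M:ℝ) ^ (1-β) := by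
  have hMR : (1:ℝ) ≤ (M:ℝ) := by exact_mod_cast hM
  set T : ℕ → ℝ := fun n => ∑' j : ℕ, r (n + j) with hTdef
  have hT : ∀ n, T n = r n + T (n+1) := fun n => aux_T r hsum n
  have hT0 : ∀ n, 0 ≤ T n := fun n => tsum_nonneg (fun j => hr _)
  rw [aux_abel (fun n => (n:ℝ)^(k+1)) r T hT 1 M hM, show (1+1 : ℕ) = 2 from rfl]
  beta_reduce

  have hMrpow : (1:ℝ) ≤ (M:ℝ)^(1-β) := Real.one_le_rpow hMR (by linarith)
  have h1 : ((1:ℕ):ℝ)^(k+1) * T 1 ≤ C := by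
    have := htail 1 le_rfl
    simp only [Nat.cast_one, one_pow, one_mul]
    calc T 1 ≤ C * ((1:ℕ):ℝ)^(-(k:ℝ)-β) := this
      _ = C := by norm_num
  have h2 : (0:ℝ) ≤ ((M:ℝ))^(k+1) * T (M+1) := mul_nonneg (by positivity) (hT0 _)
  have h3 : ∑ n ∈ Finset.Icc 2 M, ((n:ℝ)^(k+1) - ((n-1:ℕ):ℝ)^(k+1)) * T n
      ≤ ∑ n ∈ Finset.Icc 2 M, (C * (k+1)) * (n:ℝ)^(-β) := by
    apply Finset.sum_le_sum
    intro n hn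
    rw [Finset.mem_Icc] at hn
    have hn1 : 1 ≤ n := by omega
    have hnR : (1:ℝ) ≤ (n:ℝ) := by exact_mod_cast hn1
    have hnpos : (0:ℝ) < (n:ℝ) := by linarith
    have hcast : ((n-1:ℕ):ℝ) = (n:ℝ) - 1 := by push_cast [Nat.cast_sub hn1]; ring
    have hdk : (n:ℝ)^(k+1) - ((n-1:ℕ):ℝ)^(k+1) ≤ ((k:ℝ)+1) * (n:ℝ)^k := by
      rw [hcast]
      have := aux_powdiff k hnR
      push_cast at this ⊢
      linarith
    have hTn : T n ≤ C * (n:ℝ)^(-(k:ℝ)-β) := htail n hn1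
    calc ((n:ℝ)^(k+1) - ((n-1:ℕ):ℝ)^(k+1)) * T n
        ≤ (((k:ℝ)+1) * (n:ℝ)^k) * (C * (n:ℝ)^(-(k:ℝ)-β)) := by
          apply mul_le_mul hdk hTn (hT0 n)
          positivity
      _ = (C * (k+1)) * ((n:ℝ)^(k:ℕ) * (n:ℝ)^(-(k:ℝ)-β)) := by ring
      _ = (C * (k+1)) * (n:ℝ)^(-β) := by
          congr 1
          rw [← Real.rpow_natCast (n:ℝ) k, ← Real.rpow_add hnpos]
          congr 1; ring
  have h4 : ∑ n ∈ Finset.Icc 2 M, (C * (k+1)) * (n:ℝ)^(-β)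
      ≤ (C * (k+1)) * ((M:ℝ)^(1-β) / (1-β)) := by
    rw [← Finset.mul_sum]
    apply mul_le_mul_of_nonneg_left _ (by positivity)
    calc ∑ n ∈ Finset.Icc 2 M, (n:ℝ)^(-β)
        ≤ ∑ n ∈ Finset.Icc 1 M, (n:ℝ)^(-β) := by
          apply Finset.sum_le_sum_of_subset_of_nonneg
          · apply Finset.Icc_subset_Icc_left; omega
          · intro i _ _; positivity
      _ ≤ (M:ℝ)^(1-β) / (1-β) := aux_sumhead hβ0 hβ1 M
  have final : C * (M:ℝ)^(1-β) + (C * (k+1)) * ((M:ℝ)^(1-β)/(1-β))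
      = (C * (1 + (k+1) / (1-β))) * (M:ℝ)^(1-β) := by
    field_simp
  have hCM : C ≤ C * (M:ℝ)^(1-β) := by nlinarith
  have h5 := h3.trans h4
  push_cast at h1 h2 h5 final hCM ⊢
  linarith [h5]

lemma aux_summable_f (k : ℕ) (hk : 1 ≤ k) {β C : ℝ} (hβ0 : 0 < β) (hβ1 : β < 1) (hC : 0 < C)
    (r : ℕ → ℝ) (hr : ∀ n, 0 ≤ r n) (hsum : Summable r)
    (htail : ∀ n : ℕ, 1 ≤ n → (∑' j : ℕ, r (n + j)) ≤ C * (n : ℝ) ^ (-(k : ℝ) - β)) :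
    Summable (fun n : ℕ => (n:ℝ)^k * r n) := by
  apply summable_of_sum_range_le (c := C * (1 + k / β))
  · intro n; exact mul_nonneg (by positivity) (hr n)
  · intro n
    rcases Nat.eq_zero_or_pos n with rfl | hn
    · simp only [Finset.range_zero, Finset.sum_empty]
      have : (0:ℝ) ≤ (k:ℝ)/β := div_nonneg (Nat.cast_nonneg k) hβ0.le
      nlinarith
    · rw [Finset.range_eq_Ico, Finset.sum_eq_sum_Ico_succ_bot hn]
      have h0 : ((0:ℕ):ℝ)^k * r 0 = 0 := by
        rw [Nat.cast_zero, zero_pow (by omega), zero_mul]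
      rw [h0, zero_add]
      have := aux_lemA k hk hβ0 hβ1 hC r hr hsum htail 1 n le_rfl
      rw [Nat.cast_one, Real.one_rpow, mul_one] at this
      exact le_trans (by norm_num) this

lemma aux_tail_tsum (k : ℕ) (hk : 1 ≤ k) {β C : ℝ} (hβ0 : 0 < β) (hβ1 : β < 1) (hC : 0 < C)
    (r : ℕ → ℝ) (hr : ∀ n, 0 ≤ r n) (hsum : Summable r)
    (htail : ∀ n : ℕ, 1 ≤ n → (∑' j : ℕ, r (n + j)) ≤ C * (n : ℝ) ^ (-(k : ℝ) - β))
    (m : ℕ) (hm : 1 ≤ m) :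
    ∑' i : ℕ, ((i+m:ℕ):ℝ)^k * r (i+m) ≤ (C * (1 + k / β)) * (m:ℝ)^(-β) := by
  apply Real.tsum_le_of_sum_range_le
  · intro n; exact mul_nonneg (by positivity) (hr _)
  · intro n
    have hre : ∑ i ∈ Finset.range n, ((i+m:ℕ):ℝ)^k * r (i+m)
        = ∑ i ∈ Finset.Ico m (m+n), (i:ℝ)^k * r i := by
      rw [Finset.sum_Ico_eq_sum_range]
      simp only [Nat.add_sub_cancel_left]
      exact Finset.sum_congr rfl fun i _ => by rw [add_comm m i]
    rw [hre]
    exact aux_lemA k hk hβ0 hβ1 hC r hr hsum htail m (m+n) hm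

lemma aux_pow_sub_pow (z w : ℂ) (hz : ‖z‖ ≤ 1) (hw : ‖w‖ ≤ 1) (i : ℕ) :
    ‖z ^ i - w ^ i‖ ≤ i * ‖z - w‖ := by
  rw [← geom_sum₂_mul z w i, norm_mul]
  have hb : ‖∑ j ∈ Finset.range i, z^j * w^(i-1-j)‖ ≤ i := by
    calc ‖∑ j ∈ Finset.range i, z^j * w^(i-1-j)‖
        ≤ ∑ j ∈ Finset.range i, ‖z^j * w^(i-1-j)‖ := norm_sum_le _ _
      _ ≤ ∑ j ∈ Finset.range i, 1 := by
          apply Finset.sum_le_sum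
          intro j _
          rw [norm_mul, norm_pow, norm_pow]
          exact mul_le_one₀ (pow_le_one₀ (norm_nonneg _) hz)
            (pow_nonneg (norm_nonneg _) _) (pow_le_one₀ (norm_nonneg _) hw)
      _ = i := by simp
  exact mul_le_mul_of_nonneg_right hb (norm_nonneg _)

set_option maxHeartbeats 1000000 in
theorem kth_derivative_series_holder
    (k : ℕ) (hk : 1 ≤ k) (β : ℝ) (hβ : 0 < β ∧ β < 1) (C : ℝ) (hC : 0 < C) :
    ∃ C' > 0, ∀ r : ℕ → ℝ, (∀ n, 0 ≤ r n) → Summable r →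
      (∀ n : ℕ, 1 ≤ n → (∑' j : ℕ, r (n + j)) ≤ C * (n : ℝ) ^ (-(k : ℝ) - β)) →
      ∀ z₁ ∈ Metric.closedBall (0 : ℂ) 1, ∀ z₂ ∈ Metric.closedBall (0 : ℂ) 1,
        ‖(∑' i : ℕ, ((∏ m ∈ Finset.range k, ((i + k - m : ℕ) : ℝ)) : ℂ)
              * (r (i + k) : ℂ) * z₁ ^ i)
          - (∑' i : ℕ, ((∏ m ∈ Finset.range k, ((i + k - m : ℕ) : ℝ)) : ℂ)
              * (r (i + k) : ℂ) * z₂ ^ i)‖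
          ≤ C' * ‖z₁ - z₂‖ ^ β := by
  obtain ⟨hβ0, hβ1⟩ := hβ
  set C₁ := C * (1 + k / β) with hC₁def
  set C₂ := C * (1 + (k+1) / (1-β)) with hC₂def
  have hkβ : (0:ℝ) ≤ (k:ℝ)/β := div_nonneg (Nat.cast_nonneg k) hβ0.le
  have hC₁pos : 0 < C₁ := mul_pos hC (by linarith)
  have hC₂pos : 0 < C₂ := by
    have : (0:ℝ) ≤ ((k:ℝ)+1)/(1-β) := div_nonneg (by positivity) (by linarith)
    exact mul_pos hC (by push_cast; linarith)
  refine ⟨C₂ * (k+2) + 2 * C₁, by positivity, ?_⟩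
  intro r hr hsum htail z₁ hz₁ z₂ hz₂
  rw [Metric.mem_closedBall, dist_zero_right] at hz₁ hz₂
  set δ := ‖z₁ - z₂‖ with hδdef
  have hδ0 : 0 ≤ δ := norm_nonneg _
  -- notation
  set P : ℕ → ℝ := fun i => ∏ m ∈ Finset.range k, ((i + k - m : ℕ) : ℝ) with hPdef
  have hPeq : ∀ i : ℕ, ((P i : ℝ) : ℂ) = ∏ m ∈ Finset.range k, (((i + k - m : ℕ) : ℝ) : ℂ) := by
    intro i
    simp only [hPdef]
    exact Complex.ofReal_prod _ _
  simp only [← hPeq]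
  have hP0 : ∀ i, 0 ≤ P i := fun i => Finset.prod_nonneg fun m _ => Nat.cast_nonneg _
  have hPle : ∀ i, P i ≤ ((i+k:ℕ):ℝ)^k := by
    intro i
    calc P i ≤ ∏ m ∈ Finset.range k, ((i+k:ℕ):ℝ) := by
          apply Finset.prod_le_prod (fun m _ => Nat.cast_nonneg _)
          intro m _
          exact_mod_cast Nat.cast_le.mpr (Nat.sub_le _ _)
      _ = ((i+k:ℕ):ℝ)^k := by rw [Finset.prod_const, Finset.card_range]
  set f : ℕ → ℝ := fun n => (n:ℝ)^k * r n with hfdef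
  have hf0 : ∀ n, 0 ≤ f n := fun n => mul_nonneg (by positivity) (hr n)
  have hfs : Summable f := aux_summable_f k hk hβ0 hβ1 hC r hr hsum htail
  have hbs : Summable (fun i : ℕ => f (i+k)) := hfs.comp_injective (add_left_injective k)
  -- summability of the two series
  have hterm : ∀ z : ℂ, ‖z‖ ≤ 1 → ∀ i : ℕ,
      ‖(P i : ℂ) * (r (i + k) : ℂ) * z ^ i‖ ≤ f (i+k) := by
    intro z hz i
    rw [norm_mul, norm_mul, Complex.norm_real, Complex.norm_real, norm_pow]
    rw [Real.norm_of_nonneg (hP0 i), Real.norm_of_nonneg (hr _)]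
    calc P i * r (i+k) * ‖z‖^i ≤ ((i+k:ℕ):ℝ)^k * r (i+k) * 1 := by
          apply mul_le_mul (mul_le_mul (hPle i) le_rfl (hr _) (by positivity))
            (pow_le_one₀ (norm_nonneg _) hz) (by positivity)
          exact mul_nonneg (by positivity) (hr _)
      _ = f (i+k) := by rw [mul_one]
  have hs1 : Summable (fun i : ℕ => (P i : ℂ) * (r (i + k) : ℂ) * z₁ ^ i) :=
    Summable.of_norm_bounded hbs (hterm z₁ hz₁)
  have hs2 : Summable (fun i : ℕ => (P i : ℂ) * (r (i + k) : ℂ) * z₂ ^ i) :=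
    Summable.of_norm_bounded hbs (hterm z₂ hz₂)
  set h : ℕ → ℂ := fun i => (P i : ℂ) * (r (i + k) : ℂ) * (z₁ ^ i - z₂ ^ i) with hhdef
  have hsh : Summable h := by
    apply (hs1.sub hs2).congr
    intro i
    simp only [Pi.sub_apply, hhdef]
    ring
  have hdiff : (∑' i : ℕ, (P i : ℂ) * (r (i + k) : ℂ) * z₁ ^ i)
      - (∑' i : ℕ, (P i : ℂ) * (r (i + k) : ℂ) * z₂ ^ i) = ∑' i, h i := by
    refine ((Summable.tsum_sub hs1 hs2).symm).trans (tsum_congr fun i => ?_)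
    simp only [hhdef]
    ring
  have hhnorm : ∀ i, ‖h i‖ = P i * r (i+k) * ‖z₁^i - z₂^i‖ := by
    intro i
    rw [hhdef]
    simp only
    rw [norm_mul, norm_mul, Complex.norm_real, Complex.norm_real,
      Real.norm_of_nonneg (hP0 i), Real.norm_of_nonneg (hr _)]
  have hh2 : ∀ i, ‖h i‖ ≤ 2 * f (i+k) := by
    intro i
    rw [hhnorm i]
    have hz12 : ‖z₁^i - z₂^i‖ ≤ 2 := by
      calc ‖z₁^i - z₂^i‖ ≤ ‖z₁^i‖ + ‖z₂^i‖ := norm_sub_le _ _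
        _ ≤ 1 + 1 := by
            rw [norm_pow, norm_pow]
            exact add_le_add (pow_le_one₀ (norm_nonneg _) hz₁)
              (pow_le_one₀ (norm_nonneg _) hz₂)
        _ = 2 := by norm_num
    calc P i * r (i+k) * ‖z₁^i - z₂^i‖ ≤ ((i+k:ℕ):ℝ)^k * r (i+k) * 2 := by
          apply mul_le_mul (mul_le_mul (hPle i) le_rfl (hr _) (by positivity)) hz12
            (norm_nonneg _) (mul_nonneg (by positivity) (hr _))
      _ = 2 * f (i+k) := by rw [hfdef]; ring
  rw [hdiff]
  -- case δ = 0
  rcases eq_or_lt_of_le hδ0 with hδz | hδpos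
  · have hz12 : z₁ = z₂ := by
      have : ‖z₁ - z₂‖ = 0 := hδz.symm
      rwa [norm_sub_eq_zero_iff] at this
    have : ∀ i, h i = 0 := by intro i; rw [hhdef]; simp [hz12]
    rw [tsum_congr this, tsum_zero, norm_zero, ← hδz,
      Real.zero_rpow hβ0.ne', mul_zero]
  -- δ > 0
  have hnorm_summ : Summable (fun i => ‖h i‖) :=
    Summable.of_nonneg_of_le (fun i => norm_nonneg _) hh2 (hbs.mul_left 2)
  have htail_bound : ∀ m : ℕ, 1 ≤ m →
      (∑' i : ℕ, f ((i+m)+k)) ≤ C₁ * ((m+k:ℕ):ℝ)^(-β) := by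
    intro m hm
    have := aux_tail_tsum k hk hβ0 hβ1 hC r hr hsum htail (m+k) (by omega)
    calc (∑' i : ℕ, f ((i+m)+k)) = ∑' i : ℕ, ((i+(m+k):ℕ):ℝ)^k * r (i+(m+k)) := by
          apply tsum_congr
          intro i
          rw [hfdef]
          simp only
          rw [show (i+m)+k = i+(m+k) by omega]
      _ ≤ C₁ * ((m+k:ℕ):ℝ)^(-β) := this
  rcases le_or_gt 1 δ with hδ1 | hδ1
  -- easy case δ ≥ 1
  · have h1 : ‖∑' i, h i‖ ≤ ∑' i, ‖h i‖ := norm_tsum_le_tsum_norm hnorm_summ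
    have h2 : (∑' i, ‖h i‖) ≤ ∑' i, 2 * f (i+k) :=
      hnorm_summ.tsum_le_tsum hh2 (hbs.mul_left 2)
    have h3 : (∑' i : ℕ, 2 * f (i+k)) = 2 * ∑' i : ℕ, f (i+k) := tsum_mul_left
    have h4 : (∑' i : ℕ, f (i+k)) ≤ C₁ * ((k:ℕ):ℝ)^(-β) := by
      have := aux_tail_tsum k hk hβ0 hβ1 hC r hr hsum htail k hk
      calc (∑' i : ℕ, f (i+k)) = ∑' i : ℕ, ((i+k:ℕ):ℝ)^k * r (i+k) := by
            exact tsum_congr fun i => by rw [hfdef]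
        _ ≤ C₁ * ((k:ℕ):ℝ)^(-β) := this
    have h5 : ((k:ℕ):ℝ)^(-β) ≤ 1 := by
      apply Real.rpow_le_one_of_one_le_of_nonpos (by exact_mod_cast hk) (by linarith)
    have h6 : (1:ℝ) ≤ δ^β := Real.one_le_rpow hδ1 hβ0.le
    calc ‖∑' i, h i‖ ≤ 2 * (C₁ * ((k:ℕ):ℝ)^(-β)) := by
          have h6' := mul_le_mul_of_nonneg_left h4 (by norm_num : (0:ℝ) ≤ 2)
          linarith [h1, h2, h3, h6']
      _ ≤ 2 * C₁ := by nlinarith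
      _ ≤ (C₂ * (k+2) + 2 * C₁) * 1 := by nlinarith [mul_pos hC₂pos (show (0:ℝ) < (k:ℝ)+2 by positivity)]
      _ ≤ (C₂ * (k+2) + 2 * C₁) * δ^β := by
          apply mul_le_mul_of_nonneg_left h6
          positivity
  -- main case 0 < δ < 1
  · have hδinv1 : 1 ≤ δ⁻¹ := by
      rw [le_inv_comm₀ (by norm_num) hδpos]
      simpa using hδ1.le
    set N : ℕ := ⌈δ⁻¹⌉₊ with hNdef
    have hN1 : 1 ≤ N := Nat.one_le_ceil_iff.mpr (by positivity)
    have hNge : δ⁻¹ ≤ (N:ℝ) := Nat.le_ceil _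
    have hNle : (N:ℝ) ≤ δ⁻¹ + 1 := (Nat.ceil_lt_add_one (by positivity)).le
    rw [← hsh.sum_add_tsum_nat_add N]
    have hhead : ‖∑ i ∈ Finset.range N, h i‖ ≤ C₂ * ((k:ℝ)+2) * δ^β := by
      have hzi : ∀ i : ℕ, ‖h i‖ ≤ δ * (((i+k:ℕ)):ℝ)^(k+1) * r (i+k) := by
        intro i
        rw [hhnorm i]
        have h1 := aux_pow_sub_pow z₁ z₂ hz₁ hz₂ i
        calc P i * r (i+k) * ‖z₁^i - z₂^i‖
            ≤ ((i+k:ℕ):ℝ)^k * r (i+k) * ((i:ℝ) * δ) := by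
              apply mul_le_mul (mul_le_mul (hPle i) le_rfl (hr _) (by positivity)) h1
                (norm_nonneg _) (mul_nonneg (by positivity) (hr _))
          _ ≤ δ * ((i+k:ℕ):ℝ)^(k+1) * r (i+k) := by
              have hik : (i:ℝ) ≤ ((i+k:ℕ):ℝ) := by exact_mod_cast Nat.le_add_right i k
              have hstep : ((i+k:ℕ):ℝ)^k * (i:ℝ) ≤ ((i+k:ℕ):ℝ)^(k+1) := by
                rw [pow_succ]
                exact mul_le_mul_of_nonneg_left hik (by positivity)
              have := mul_le_mul_of_nonneg_right
                (mul_le_mul_of_nonneg_left hstep hδ0) (hr (i+k))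
              nlinarith [this]
      have hB : ((N+k-1:ℕ):ℝ) ≤ ((k:ℝ)+2) * δ⁻¹ := by
        have hc : ((N+k-1:ℕ):ℝ) = (N:ℝ) + (k:ℝ) - 1 := by
          push_cast [Nat.cast_sub (show 1 ≤ N+k by omega)]
          ring
        rw [hc]
        nlinarith [hNle, hδinv1, Nat.cast_nonneg (α := ℝ) k]
      have hB1 : ((N+k-1:ℕ):ℝ)^(1-β) ≤ ((k:ℝ)+2)^(1-β) * (δ⁻¹)^(1-β) := by
        rw [← Real.mul_rpow (by positivity) (by positivity)]
        exact Real.rpow_le_rpow (Nat.cast_nonneg _) hB (by linarith)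
      have hδid : δ * (δ⁻¹)^(1-β) = δ^β := by
        have h1 : (δ⁻¹:ℝ)^(1-β) = δ^((-1)*(1-β)) := by
          rw [Real.rpow_mul hδ0, Real.rpow_neg_one]
        rw [h1, show δ * δ^((-1)*(1-β)) = δ^(1:ℝ) * δ^((-1)*(1-β)) by rw [Real.rpow_one],
          ← Real.rpow_add hδpos]
        congr 1
        ring
      have hk2 : ((k:ℝ)+2)^(1-β) ≤ (k:ℝ)+2 := by
        calc ((k:ℝ)+2)^(1-β) ≤ ((k:ℝ)+2)^(1:ℝ) :=
              Real.rpow_le_rpow_of_exponent_le (by linarith [Nat.cast_nonneg (α := ℝ) k])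
                (by linarith)
          _ = (k:ℝ)+2 := Real.rpow_one _
      calc ‖∑ i ∈ Finset.range N, h i‖ ≤ ∑ i ∈ Finset.range N, ‖h i‖ := norm_sum_le _ _
        _ ≤ ∑ i ∈ Finset.range N, δ * ((i+k:ℕ):ℝ)^(k+1) * r (i+k) :=
            Finset.sum_le_sum fun i _ => hzi i
        _ = δ * ∑ i ∈ Finset.range N, ((i+k:ℕ):ℝ)^(k+1) * r (i+k) := by
            rw [Finset.mul_sum]
            exact Finset.sum_congr rfl fun i _ => by ring
        _ ≤ δ * ∑ n ∈ Finset.Icc 1 (N+k-1), (n:ℝ)^(k+1) * r n := by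
            apply mul_le_mul_of_nonneg_left ?_ hδ0
            have hre : ∑ i ∈ Finset.range N, ((i+k:ℕ):ℝ)^(k+1) * r (i+k)
                = ∑ n ∈ Finset.Ico k (k+N), (n:ℝ)^(k+1) * r n := by
              rw [Finset.sum_Ico_eq_sum_range]
              simp only [Nat.add_sub_cancel_left]
              exact Finset.sum_congr rfl fun i _ => by rw [add_comm k i]
            rw [hre]
            apply Finset.sum_le_sum_of_subset_of_nonneg
            · intro x hx
              rw [Finset.mem_Ico] at hx
              rw [Finset.mem_Icc]
              omega
            · intro n _ _
              exact mul_nonneg (by positivity) (hr n)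
        _ ≤ δ * (C₂ * ((N+k-1:ℕ):ℝ)^(1-β)) := by
            apply mul_le_mul_of_nonneg_left ?_ hδ0
            exact aux_lemB k hk hβ0 hβ1 hC r hr hsum htail (N+k-1) (by omega)
        _ ≤ δ * (C₂ * (((k:ℝ)+2)^(1-β) * (δ⁻¹)^(1-β))) := by
            exact mul_le_mul_of_nonneg_left (mul_le_mul_of_nonneg_left hB1 hC₂pos.le) hδ0
        _ = C₂ * ((k:ℝ)+2)^(1-β) * (δ * (δ⁻¹)^(1-β)) := by ring
        _ = C₂ * ((k:ℝ)+2)^(1-β) * δ^β := by rw [hδid]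
        _ ≤ C₂ * ((k:ℝ)+2) * δ^β :=
            mul_le_mul_of_nonneg_right (mul_le_mul_of_nonneg_left hk2 hC₂pos.le)
              (Real.rpow_nonneg hδ0 β)
    have htail2 : ‖∑' i, h (i + N)‖ ≤ 2 * C₁ * δ^β := by
      have hsub : Summable (fun i : ℕ => ‖h (i+N)‖) :=
        hnorm_summ.comp_injective (add_left_injective N)
      have hb2 : Summable (fun i : ℕ => 2 * f ((i+N)+k)) :=
        ((hbs.comp_injective (add_left_injective N)).mul_left 2)
      have h1 : ((N+k:ℕ):ℝ)^(-β) ≤ δ^β := by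
        have hg : δ⁻¹ ≤ ((N+k:ℕ):ℝ) := by
          push_cast
          linarith [hNge, Nat.cast_nonneg (α := ℝ) k]
        have h2 := Real.rpow_le_rpow_of_nonpos (by positivity) hg (by linarith : -β ≤ 0)
        have h3 : (δ⁻¹:ℝ)^(-β) = δ^β := by
          rw [show (δ⁻¹:ℝ)^(-β) = δ^((-1)*(-β)) by
            rw [Real.rpow_mul hδ0, Real.rpow_neg_one]]
          congr 1
          ring
        linarith [h3 ▸ h2]
      calc ‖∑' i, h (i + N)‖ ≤ ∑' i, ‖h (i+N)‖ := norm_tsum_le_tsum_norm hsub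
        _ ≤ ∑' i, 2 * f ((i+N)+k) := hsub.tsum_le_tsum (fun i => hh2 (i+N)) hb2
        _ = 2 * ∑' i, f ((i+N)+k) := tsum_mul_left
        _ ≤ 2 * (C₁ * ((N+k:ℕ):ℝ)^(-β)) :=
            mul_le_mul_of_nonneg_left (htail_bound N hN1) (by norm_num)
        _ ≤ 2 * C₁ * δ^β := by
            rw [← mul_assoc]
            have h2C : (0:ℝ) ≤ 2*C₁ := by linarith
            exact mul_le_mul_of_nonneg_left h1 h2C
    calc ‖(∑ i ∈ Finset.range N, h i) + ∑' i, h (i + N)‖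
        ≤ ‖∑ i ∈ Finset.range N, h i‖ + ‖∑' i, h (i + N)‖ := norm_add_le _ _
      _ ≤ C₂ * ((k:ℝ)+2) * δ^β + 2 * C₁ * δ^β := add_le_add hhead htail2
      _ = (C₂ * (k+2) + 2 * C₁) * δ^β := by push_cast; ring
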